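/- Let Ω be a real number and let σ satisfy 0 ≤ σ < π. Then ∫_{θ=σ/2}^{π} 1/(Ω²·sin²(θ − σ/2) + 1) dθ = (π − arctan(√(Ω²+1)·tan(σ/2))) / √(Ω²+1). -/

import Mathlib

open Real

lemma phi_deriv (k : ℝ) (hk : 1 ≤ k) (u : ℝ) :
    HasDerivAt (fun u => u + Real.arctan ((k - 1) * Real.sin u * Real.cos u /
        (Real.cos u ^ 2 + k * Real.sin u ^ 2)))
      (k / ((k ^ 2 - 1) * Real.sin u ^ 2 + 1)) u := by
  have hsc := Real.sin_sq_add_cos_sq u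
  set s := Real.sin u with hs
  set c := Real.cos u with hc
  have hD : (1:ℝ) ≤ c ^ 2 + k * s ^ 2 := by nlinarith [sq_nonneg s, sq_nonneg c]
  have hDne : c ^ 2 + k * s ^ 2 ≠ 0 := by linarith
  have hN : HasDerivAt (fun u => (k - 1) * Real.sin u * Real.cos u)
      ((k - 1) * (c ^ 2 - s ^ 2)) u := by
    have := (((Real.hasDerivAt_sin u).const_mul (k-1)).mul (Real.hasDerivAt_cos u))
    refine this.congr_deriv ?_
    ring
  have hDd : HasDerivAt (fun u => Real.cos u ^ 2 + k * Real.sin u ^ 2)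
      (2 * (k - 1) * s * c) u := by
    have := (((Real.hasDerivAt_cos u).pow 2).add (((Real.hasDerivAt_sin u).pow 2).const_mul k))
    refine this.congr_deriv ?_
    ring
  have hg := (hN.div hDd hDne).arctan
  have := (hasDerivAt_id u).add hg
  refine this.congr_deriv ?_
  have h1 : (k ^ 2 - 1) * s ^ 2 + 1 ≠ 0 := by nlinarith [sq_nonneg s]
  have h2 : (c ^ 2 + k * s ^ 2) ^ 2 ≠ 0 := pow_ne_zero 2 hDne
  have h3 : 1 + ((k - 1) * s * c / (c ^ 2 + k * s ^ 2)) ^ 2 ≠ 0 := by positivity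
  simp only [Pi.div_apply, ← hs, ← hc]
  field_simp
  have hc2 : c ^ 2 = 1 - s ^ 2 := by linarith
  rw [eq_div_iff (by nlinarith [sq_nonneg s]), hc2]
  ring

lemma arctan_k_tan (k x : ℝ) (hk : 1 ≤ k) (hx0 : 0 ≤ x) (hx : x < π / 2) :
    Real.arctan (k * Real.tan x) = x +
      Real.arctan ((k - 1) * Real.sin x * Real.cos x / (Real.cos x ^ 2 + k * Real.sin x ^ 2)) := by
  have hcpos : 0 < Real.cos x := Real.cos_pos_of_mem_Ioo ⟨by linarith [Real.pi_pos], hx⟩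
  have hspos : 0 ≤ Real.sin x := Real.sin_nonneg_of_nonneg_of_le_pi hx0 (by linarith [Real.pi_pos])
  have htan : 0 ≤ Real.tan x := by
    rw [Real.tan_eq_sin_div_cos]; positivity
  set A := Real.arctan (k * Real.tan x) with hA
  have hA0 : 0 ≤ A := by
    rw [hA, ← Real.arctan_zero]
    exact Real.arctan_strictMono.monotone (by positivity)
  have hA2 : A < π / 2 := Real.arctan_lt_pi_div_two _
  have hy : k * Real.tan x = k * Real.sin x / Real.cos x := by
    rw [Real.tan_eq_sin_div_cos]; ring
  have hsc := Real.sin_sq_add_cos_sq x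
  have hD : (0:ℝ) < Real.cos x ^ 2 + k * Real.sin x ^ 2 := by nlinarith [sq_nonneg (Real.sin x)]
  have hsq : (0:ℝ) < Real.sqrt (1 + (k * Real.tan x) ^ 2) := Real.sqrt_pos.2 (by positivity)
  have key : Real.tan (A - x) =
      (k - 1) * Real.sin x * Real.cos x / (Real.cos x ^ 2 + k * Real.sin x ^ 2) := by
    rw [Real.tan_eq_sin_div_cos, Real.sin_sub, Real.cos_sub, hA,
      Real.sin_arctan, Real.cos_arctan, hy]
    rw [div_eq_div_iff]
    · field_simp
    · positivity
    · exact ne_of_gt hD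
  have : Real.arctan (Real.tan (A - x)) = A - x :=
    Real.arctan_tan (by linarith) (by linarith)
  rw [key] at this
  linarith [this]

/-- Key integral evaluation for the area density of a random spherical triangle,
case 0 ≤ σ < π. -/
theorem area_density_integral_lt_pi (Ω σ : ℝ) (h0 : 0 ≤ σ) (h1 : σ < π) :
    (∫ θ in (σ / 2)..π, 1 / (Ω ^ 2 * Real.sin (θ - σ / 2) ^ 2 + 1))
    = (π - Real.arctan (Real.sqrt (Ω ^ 2 + 1) * Real.tan (σ / 2))) /
        Real.sqrt (Ω ^ 2 + 1) := by
  set k := Real.sqrt (Ω ^ 2 + 1) with hkdef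
  have hk2 : k ^ 2 = Ω ^ 2 + 1 := Real.sq_sqrt (by positivity)
  have hk1 : 1 ≤ k := by
    rw [hkdef]
    exact Real.one_le_sqrt.mpr (by nlinarith [sq_nonneg Ω])
  have hkpos : 0 < k := by linarith
  set G : ℝ → ℝ := fun θ => (θ - σ / 2 + Real.arctan ((k - 1) * Real.sin (θ - σ / 2) *
      Real.cos (θ - σ / 2) / (Real.cos (θ - σ / 2) ^ 2 + k * Real.sin (θ - σ / 2) ^ 2))) / k
      with hG
  have hderiv : ∀ θ ∈ Set.uIcc (σ / 2) π,
      HasDerivAt G (1 / (Ω ^ 2 * Real.sin (θ - σ / 2) ^ 2 + 1)) θ := by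
    intro θ _
    have h := ((phi_deriv k hk1 (θ - σ / 2)).comp θ ((hasDerivAt_id θ).sub_const (σ / 2))).div_const k
    refine h.congr_deriv ?_
    have hpos : (0:ℝ) < (k ^ 2 - 1) * Real.sin (θ - σ / 2) ^ 2 + 1 := by
      nlinarith [sq_nonneg (Real.sin (θ - σ / 2))]
    rw [show k ^ 2 - 1 = Ω ^ 2 by linarith] at hpos ⊢
    field_simp
  have hint : IntervalIntegrable (fun θ => 1 / (Ω ^ 2 * Real.sin (θ - σ / 2) ^ 2 + 1))
      MeasureTheory.volume (σ / 2) π := by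
    apply Continuous.intervalIntegrable
    apply Continuous.div continuous_const
    · fun_prop
    · intro x
      positivity
  rw [intervalIntegral.integral_eq_sub_of_hasDerivAt hderiv hint]
  have hG1 : G (σ / 2) = 0 := by
    simp [hG]
  have hx0 : 0 ≤ σ / 2 := by linarith
  have hx1 : σ / 2 < π / 2 := by linarith
  have hid := arctan_k_tan k (σ / 2) hk1 hx0 hx1
  have hG2 : G π = (π - Real.arctan (k * Real.tan (σ / 2))) / k := by
    rw [hG]
    have hps : Real.sin (π - σ / 2) = Real.sin (σ / 2) := Real.sin_pi_sub _
    have hpc : Real.cos (π - σ / 2) = -Real.cos (σ / 2) := Real.cos_pi_sub _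
    simp only [hps, hpc]
    rw [show (k - 1) * Real.sin (σ / 2) * -Real.cos (σ / 2) / ((-Real.cos (σ / 2)) ^ 2 +
        k * Real.sin (σ / 2) ^ 2) = -((k - 1) * Real.sin (σ / 2) * Real.cos (σ / 2) /
        (Real.cos (σ / 2) ^ 2 + k * Real.sin (σ / 2) ^ 2)) by ring_nf,
      Real.arctan_neg]
    rw [hid]
    ring
  rw [hG1, hG2, sub_zero]
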